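/- Let L be a length function on a finite set X satisfying Kraft's inequality and G_L its associated guessing function (increasing order of L-lengths). Then for any B \ge 1, {x : G_L(x) \ge 2^B} \subseteq {x : L(x) \ge B}. -/

import Mathlib

/-- For a length function `L` satisfying Kraft's inequality and its associated guessing
function `G_L`, for any `B ≥ 1`, `{G_L ≥ 2^B} ⊆ {L ≥ B}`. -/
theorem guess_level_subset_length_level {α : Type*} [Fintype α] [Nonempty α]
    (L : α → ℕ) (hKraft : ∑ x, (2 : ℝ) ^ (-(L x : ℤ)) ≤ 1)
    (G : α → ℕ) (hGinj : Function.Injective G)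
    (hGrange : ∀ x, 1 ≤ G x ∧ G x ≤ Fintype.card α)
    (hinc : ∀ a b, G a ≤ G b → L a ≤ L b)
    (B : ℝ) (hB : 1 ≤ B) :
    {x : α | (2 : ℝ) ^ B ≤ (G x : ℝ)} ⊆ {x : α | B ≤ (L x : ℝ)} := by
  intro x hx
  simp only [Set.mem_setOf_eq] at hx ⊢
  by_contra hlt
  push_neg at hlt
  set n := Fintype.card α
  have hT : Finset.univ.image G = Finset.Icc 1 n := by
    apply Finset.eq_of_subset_of_card_le
    · intro m hm
      simp only [Finset.mem_image] at hm
      obtain ⟨y, _, rfl⟩ := hm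
      simp [Finset.mem_Icc, (hGrange y).1, (hGrange y).2]
    · rw [Finset.card_image_of_injective _ hGinj, Finset.card_univ]
      simp [Nat.card_Icc]
      exact le_rfl
  set S := Finset.univ.filter (fun y => G y ≤ G x) with hS
  have hcard : G x ≤ S.card := by
    have hsub : Finset.Icc 1 (G x) ⊆ S.image G := by
      intro m hm
      rw [Finset.mem_Icc] at hm
      have hmem : m ∈ Finset.univ.image G := by
        rw [hT, Finset.mem_Icc]; exact ⟨hm.1, hm.2.trans (hGrange x).2⟩
      simp only [Finset.mem_image] at hmem ⊢
      obtain ⟨y, _, rfl⟩ := hmem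
      exact ⟨y, by simp [hS, hm.2], rfl⟩
    calc G x = (Finset.Icc 1 (G x)).card := by simp [Nat.card_Icc]
      _ ≤ (S.image G).card := Finset.card_le_card hsub
      _ = S.card := Finset.card_image_of_injective _ hGinj
  have hterm : ∀ y ∈ S, (2:ℝ) ^ (-(L x : ℤ)) ≤ (2:ℝ) ^ (-(L y : ℤ)) := by
    intro y hy
    simp only [hS, Finset.mem_filter] at hy
    have := hinc y x hy.2
    apply zpow_le_zpow_right₀ (by norm_num)
    omega
  have hsum : (S.card : ℝ) * (2:ℝ) ^ (-(L x : ℤ)) ≤ ∑ y, (2:ℝ) ^ (-(L y : ℤ)) := by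
    calc (S.card : ℝ) * (2:ℝ) ^ (-(L x : ℤ)) = ∑ _y ∈ S, (2:ℝ) ^ (-(L x : ℤ)) := by
          rw [Finset.sum_const, nsmul_eq_mul]
      _ ≤ ∑ y ∈ S, (2:ℝ) ^ (-(L y : ℤ)) := Finset.sum_le_sum hterm
      _ ≤ ∑ y, (2:ℝ) ^ (-(L y : ℤ)) :=
          Finset.sum_le_sum_of_subset_of_nonneg (Finset.subset_univ S)
            (fun y _ _ => by positivity)
  have h1 : (1:ℝ) < (G x : ℝ) * (2:ℝ) ^ (-(L x : ℤ)) := by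
    have h2 : (2:ℝ) ^ B * (2:ℝ) ^ (-(L x : ℤ)) ≤ (G x : ℝ) * (2:ℝ) ^ (-(L x : ℤ)) :=
      mul_le_mul_of_nonneg_right hx (by positivity)
    have h3 : (1:ℝ) < (2:ℝ) ^ B * (2:ℝ) ^ (-(L x : ℤ)) := by
      have he : (2:ℝ) ^ (-(L x : ℤ)) = (2:ℝ) ^ ((-(L x : ℤ) : ℝ)) := by
        rw [← Real.rpow_intCast]; norm_cast
      rw [he, ← Real.rpow_add (by norm_num)]
      have hpos : (0:ℝ) < B + (-(L x : ℤ) : ℝ) := by push_cast; linarith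
      calc (1:ℝ) = (2:ℝ) ^ (0:ℝ) := by simp
        _ < _ := (Real.rpow_lt_rpow_left_iff (by norm_num)).mpr hpos
    linarith
  have h4 : (G x : ℝ) * (2:ℝ) ^ (-(L x : ℤ)) ≤ 1 := by
    calc (G x : ℝ) * (2:ℝ) ^ (-(L x : ℤ)) ≤ (S.card : ℝ) * (2:ℝ) ^ (-(L x : ℤ)) :=
          mul_le_mul_of_nonneg_right (by exact_mod_cast hcard) (by positivity)
      _ ≤ _ := hsum
      _ ≤ 1 := hKraft
  linarith
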